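/- Let μ > 0 and define δ_μ(ε) = Φ(−ε/μ + μ/2) − e^ε·Φ(−ε/μ − μ/2). Let P and Q be probability measures on a measurable space such that for every ε ≥ 0 the pair (P, Q) satisfies (ε, δ_μ(ε))-indistinguishability. Then for every measurable set E with P(E) ∈ (0,1) and every t ∈ ℝ with Φ(t) = 1 − P(E), one has 1 − Q(E) ≥ Φ(t − μ); that is, a mechanism that is (ε, δ_μ(ε))-differentially private for all ε ≥ 0 is μ-Gaussian differentially private. -/

import Mathlib

open MeasureTheory ProbabilityTheory Real

/-- The cumulative distribution function of the standard Gaussian `N(0,1)`. -/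
noncomputable def stdGaussCDF (x : ℝ) : ℝ :=
  ProbabilityTheory.cdf (ProbabilityTheory.gaussianReal 0 1) x

/-- The `δ(ε)` curve of `μ`-Gaussian differential privacy. -/
noncomputable def gdpDelta (μ ε : ℝ) : ℝ :=
  stdGaussCDF (-ε / μ + μ / 2) - Real.exp ε * stdGaussCDF (-ε / μ - μ / 2)

lemma stdGaussCDF_neg (x : ℝ) : stdGaussCDF (-x) = 1 - stdGaussCDF x := by
  set G := gaussianReal 0 1 with hG
  have hmap : G.map (fun y : ℝ => (-1 : ℝ) * y) = G := by
    have hv : (NNReal.mk ((-1:ℝ)^2) (sq_nonneg _)) * 1 = 1 := by ext; norm_num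
    rw [hG, gaussianReal_map_const_mul, hv]
    norm_num
  have hatom : G {x} = 0 :=
    gaussianReal_absolutelyContinuous 0 one_ne_zero (Real.volume_singleton)
  have key : G (Set.Iic (-x)) = G (Set.Ici x) := by
    conv_lhs => rw [← hmap]
    rw [Measure.map_apply (by fun_prop) measurableSet_Iic]
    congr 1
    ext y
    simp only [Set.mem_preimage, Set.mem_Iic, Set.mem_Ici]
    constructor <;> intro h <;> linarith
  have h2 : G (Set.Ici x) = G (Set.Ioi x) := by
    refine le_antisymm ?_ (measure_mono Set.Ioi_subset_Ici_self)
    rw [← Set.Ioi_union_left]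
    exact (measure_union_le _ _).trans (by simp [hatom])
  have h1 : G (Set.Iic x) + G (Set.Ioi x) = 1 := by
    have h := measure_add_measure_compl (μ := G) (measurableSet_Iic (a := x))
    rwa [Set.compl_Iic, measure_univ] at h
  unfold stdGaussCDF
  rw [cdf_eq_real, cdf_eq_real, Measure.real, Measure.real, ← hG, key, h2]
  have ht1 : (G (Set.Iic x)).toReal + (G (Set.Ioi x)).toReal = 1 := by
    rw [← ENNReal.toReal_add (measure_ne_top G _) (measure_ne_top G _), h1, ENNReal.toReal_one]
  linarith

lemma toReal_compl_prob {Ω : Type*} [MeasurableSpace Ω] (P : Measure Ω) [IsProbabilityMeasure P]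
    {E : Set Ω} (hE : MeasurableSet E) : (P Eᶜ).toReal = 1 - (P E).toReal := by
  have h := measure_add_measure_compl hE (μ := P)
  rw [measure_univ] at h
  have ht : (P E).toReal + (P Eᶜ).toReal = 1 := by
    rw [← ENNReal.toReal_add (measure_ne_top P _) (measure_ne_top P _), h, ENNReal.toReal_one]
  linarith

theorem stmt_13 {Ω : Type*} [MeasurableSpace Ω] (μ : ℝ) (hμ : 0 < μ)
    (P Q : Measure Ω) [IsProbabilityMeasure P] [IsProbabilityMeasure Q]
    (hindist : ∀ ε : ℝ, 0 ≤ ε → ∀ O : Set Ω, MeasurableSet O →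
      (P O).toReal ≤ Real.exp ε * (Q O).toReal + gdpDelta μ ε ∧
      (Q O).toReal ≤ Real.exp ε * (P O).toReal + gdpDelta μ ε) :
    ∀ E : Set Ω, MeasurableSet E → (P E).toReal ∈ Set.Ioo (0 : ℝ) 1 →
      ∀ t : ℝ, stdGaussCDF t = 1 - (P E).toReal →
        1 - (Q E).toReal ≥ stdGaussCDF (t - μ) := by
  intro E hE hPE t ht
  have hμ' : μ ≠ 0 := ne_of_gt hμ
  rcases le_or_gt (μ / 2) t with hcase | hcase
  · -- t ≥ μ/2 : use Q ≤ e^ε P + δ on E with ε = μ*t - μ²/2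
    set ε := μ * t - μ ^ 2 / 2 with hε
    have hε0 : 0 ≤ ε := by
      have h0 : 0 ≤ μ * (t - μ / 2) := mul_nonneg hμ.le (by linarith)
      rw [hε]; nlinarith [h0]
    have hQ := (hindist ε hε0 E hE).2
    have harg1 : -ε / μ + μ / 2 = -(t - μ) := by field_simp; ring
    have harg2 : -ε / μ - μ / 2 = -t := by field_simp; ring
    rw [gdpDelta, harg1, harg2, stdGaussCDF_neg, stdGaussCDF_neg, ht] at hQ
    linarith
  · -- t < μ/2 : use P ≤ e^ε Q + δ on Eᶜ with ε = μ²/2 - μ*t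
    set ε := μ ^ 2 / 2 - μ * t with hε
    have hε0 : 0 ≤ ε := by
      have h0 : 0 ≤ μ * (μ / 2 - t) := mul_nonneg hμ.le (by linarith)
      rw [hε]; nlinarith [h0]
    have hP := (hindist ε hε0 Eᶜ hE.compl).1
    have harg1 : -ε / μ + μ / 2 = t := by field_simp; ring
    have harg2 : -ε / μ - μ / 2 = t - μ := by field_simp; ring
    rw [gdpDelta, harg1, harg2, toReal_compl_prob P hE, toReal_compl_prob Q hE, ht] at hP
    have hexp : (0 : ℝ) < Real.exp ε := Real.exp_pos ε
    nlinarith [hP, hexp]
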